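/- Let d ≥ 1 and let b : [0,∞)^d → ℝ satisfy Assumption (A). For τ > 0 set P_τ = {ν ∈ [0,∞)^d : b(ν) ≤ τ}, and let P = ⋂_{τ>0} (1/τ)P_τ in the increasing case (respectively P = ⋃_{τ>0} (1/τ)P_τ in the decreasing case). Assume P is Jordan measurable with Lebesgue measure |P|. For each M ∈ ℕ let Λ_M ⊂ ℕ^d be a quasi-optimal index set of cardinality M. Then for every ε > 0 there exists M_ε ∈ ℕ such that for all M ≥ M_ε, the tail sum satisfies ∑_{ν ∈ ℕ^d \ Λ_M} e^{−b(ν)} ≤ C_u(ε) · M · exp( − ( M / (|P|(1+ε)) )^{1/d} ), where C_u(ε) = (4e + 4εe − 2)·e/(e−1). -/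

import Mathlib

open MeasureTheory Real Filter Pointwise Topology
open scoped ENNReal NNReal

set_option maxHeartbeats 1000000

noncomputable section

/-- Embedding of a multi-index `ν ∈ ℕ^d` into `ℝ^d`. -/
def nuR {d : ℕ} (ν : Fin d → ℕ) : Fin d → ℝ := fun i => (ν i : ℝ)

/-- Euclidean norm on `ℝ^d` (viewed as `Fin d → ℝ`). -/
def eNorm {d : ℕ} (x : Fin d → ℝ) : ℝ := Real.sqrt (∑ i, x i ^ 2)

/-- `τ ↦ b(τν)/τ` is increasing on `(0,∞)` for every nonnegative `ν`. -/
def IsIncreasingCase {d : ℕ} (b : (Fin d → ℝ) → ℝ) : Prop :=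
  ∀ ν : Fin d → ℝ, (∀ i, 0 ≤ ν i) → MonotoneOn (fun τ : ℝ => b (τ • ν) / τ) (Set.Ioi 0)

/-- `τ ↦ b(τν)/τ` is decreasing on `(0,∞)` for every nonnegative `ν`. -/
def IsDecreasingCase {d : ℕ} (b : (Fin d → ℝ) → ℝ) : Prop :=
  ∀ ν : Fin d → ℝ, (∀ i, 0 ≤ ν i) → AntitoneOn (fun τ : ℝ => b (τ • ν) / τ) (Set.Ioi 0)

/-- Assumption (A) on the exponent map `b : [0,∞)^d → ℝ`:
(i) `b 0 = 0` and `b` continuous on the nonnegative orthant;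
(ii) `τ ↦ b(τν)/τ` monotone increasing for all nonnegative `ν`, or decreasing for all such `ν`;
(iii) there are `0 < c < C` with `c‖ν‖ ≤ b ν ≤ C‖ν‖` for all nonnegative `ν` with
`‖ν‖` (Euclidean norm) sufficiently large. -/
def AssumptionA {d : ℕ} (b : (Fin d → ℝ) → ℝ) : Prop :=
  b 0 = 0 ∧ ContinuousOn b {x | ∀ i, 0 ≤ x i} ∧
  (IsIncreasingCase b ∨ IsDecreasingCase b) ∧
  ∃ c C : ℝ, 0 < c ∧ c < C ∧ ∃ R : ℝ, ∀ x : Fin d → ℝ, (∀ i, 0 ≤ x i) → R ≤ eNorm x →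
    c * eNorm x ≤ b x ∧ b x ≤ C * eNorm x

/-- `P_τ = {ν ∈ [0,∞)^d : b(ν) ≤ τ}`. -/
def Pset {d : ℕ} (b : (Fin d → ℝ) → ℝ) (τ : ℝ) : Set (Fin d → ℝ) :=
  {x | (∀ i, 0 ≤ x i) ∧ b x ≤ τ}

/-- Constant `C_u(ε) = (4e + 4εe − 2)·e/(e−1)`. -/
def Cu (ε : ℝ) : ℝ :=
  (4 * Real.exp 1 + 4 * ε * Real.exp 1 - 2) * Real.exp 1 / (Real.exp 1 - 1)

section AuxLemmas

variable {d : ℕ}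

lemma eNorm_nonneg (x : Fin d → ℝ) : 0 ≤ eNorm x := Real.sqrt_nonneg _

lemma abs_le_eNorm (x : Fin d → ℝ) (i : Fin d) : |x i| ≤ eNorm x := by
  rw [eNorm, ← Real.sqrt_sq_eq_abs]
  apply Real.sqrt_le_sqrt
  exact Finset.single_le_sum (f := fun j => x j ^ 2) (fun j _ => sq_nonneg _) (Finset.mem_univ i)

lemma norm_le_eNorm (x : Fin d → ℝ) : ‖x‖ ≤ eNorm x := by
  apply pi_norm_le_iff_of_nonneg (eNorm_nonneg x) |>.2
  intro i
  simpa [Real.norm_eq_abs] using abs_le_eNorm x i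

lemma eNorm_smul {t : ℝ} (ht : 0 ≤ t) (x : Fin d → ℝ) : eNorm (t • x) = t * eNorm x := by
  simp only [eNorm, Pi.smul_apply, smul_eq_mul, mul_pow, ← Finset.mul_sum]
  rw [Real.sqrt_mul (sq_nonneg t), Real.sqrt_sq ht]

lemma eNorm_zero : eNorm (0 : Fin d → ℝ) = 0 := by simp [eNorm]

lemma eNorm_pos {x : Fin d → ℝ} (hx : x ≠ 0) : 0 < eNorm x := by
  rcases Function.ne_iff.1 hx with ⟨i, hi⟩
  calc (0:ℝ) < |x i| := abs_pos.2 hi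
    _ ≤ eNorm x := abs_le_eNorm x i

lemma isClosed_orthant : IsClosed {x : Fin d → ℝ | ∀ i, 0 ≤ x i} := by
  have : {x : Fin d → ℝ | ∀ i, 0 ≤ x i} = Set.pi Set.univ (fun _ => Set.Ici 0) := by
    ext x; simp [Set.mem_pi, Pi.le_def]
  rw [this]
  exact isClosed_set_pi fun i _ => isClosed_Ici

lemma isClosed_Pset {b : (Fin d → ℝ) → ℝ} (hc : ContinuousOn b {x | ∀ i, 0 ≤ x i}) (τ : ℝ) :
    IsClosed (Pset b τ) := by
  have : Pset b τ = {x : Fin d → ℝ | ∀ i, 0 ≤ x i} ∩ b ⁻¹' (Set.Iic τ) := by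
    ext x; simp [Pset, Set.mem_setOf_eq, and_comm]
  rw [this]
  exact hc.preimage_isClosed_of_isClosed isClosed_orthant isClosed_Iic

/-- finiteness of lattice sublevel sets -/
lemma finite_sublevel {b : (Fin d → ℝ) → ℝ} {c R : ℝ} (hc : 0 < c)
    (hlow : ∀ x : Fin d → ℝ, (∀ i, 0 ≤ x i) → R ≤ eNorm x → c * eNorm x ≤ b x) (t : ℝ) :
    {ν : Fin d → ℕ | b (nuR ν) ≤ t}.Finite := by
  classical
  set B : ℝ := max R (t / c) with hB
  have hsub : {ν : Fin d → ℕ | b (nuR ν) ≤ t} ⊆ {ν : Fin d → ℕ | ∀ i, (ν i : ℝ) ≤ B} := by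
    intro ν hν i
    have hnn : ∀ i, (0:ℝ) ≤ nuR ν i := fun i => Nat.cast_nonneg _
    have h1 : (ν i : ℝ) ≤ eNorm (nuR ν) := by
      have := abs_le_eNorm (nuR ν) i
      rwa [abs_of_nonneg (hnn i)] at this
    by_cases hR : R ≤ eNorm (nuR ν)
    · have h2 := hlow (nuR ν) hnn hR
      have h3 : c * eNorm (nuR ν) ≤ t := h2.trans hν
      have : eNorm (nuR ν) ≤ t / c := (le_div_iff₀ hc).2 (by linarith [h3])
      exact h1.trans (this.trans (le_max_right _ _))
    · exact h1.trans ((le_of_not_ge hR).trans (le_max_left _ _))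
  apply Set.Finite.subset _ hsub
  have : {ν : Fin d → ℕ | ∀ i, (ν i : ℝ) ≤ B} ⊆ Set.pi Set.univ (fun _ : Fin d => {n : ℕ | n ≤ Nat.floor B}) := by
    intro ν hν i _
    exact Nat.le_floor (by simpa using hν i)
  exact (Set.Finite.pi (fun i => Set.finite_Iic (Nat.floor B))).subset this

/-- summability of r^{∑ ν i} over ν : Fin d → ℕ -/
lemma summable_geom_pi {r : ℝ} (h0 : 0 ≤ r) (h1 : r < 1) (n : ℕ) :
    Summable (fun ν : Fin n → ℕ => r ^ (∑ i, ν i)) := by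
  induction n with
  | zero => simp [Summable]; exact summable_of_finite_support (Set.toFinite _)
  | succ n ih =>
    have h2 := (summable_geometric_of_lt_one h0 h1).mul_of_nonneg ih
        (fun m => pow_nonneg h0 _) (fun ν => pow_nonneg h0 _)
    have h3 : ∀ p : ℕ × (Fin n → ℕ),
        (r ^ p.1) * r ^ (∑ i, p.2 i) = r ^ (∑ i, ((Fin.consEquiv (fun _ : Fin (n+1) => ℕ)) p) i) := by
      rintro ⟨a, g⟩
      have e1 : ((Fin.consEquiv (fun _ : Fin (n+1) => ℕ)) (a, g)) = Fin.cons a g := rfl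
      rw [e1, Fin.sum_cons, pow_add]
    exact ((Fin.consEquiv (fun _ : Fin (n+1) => ℕ)).summable_iff).1 ((summable_congr h3).1 h2)

lemma sum_le_d_mul_eNorm (ν : Fin d → ℕ) : (∑ i, (ν i : ℝ)) ≤ d * eNorm (nuR ν) := by
  calc (∑ i, (ν i : ℝ)) ≤ ∑ _i : Fin d, eNorm (nuR ν) := by
        apply Finset.sum_le_sum
        intro i _
        have h := abs_le_eNorm (nuR ν) i
        rw [show nuR ν i = ((ν i : ℕ) : ℝ) from rfl, abs_of_nonneg (Nat.cast_nonneg _)] at h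
        exact h
    _ = d * eNorm (nuR ν) := by rw [Finset.sum_const, Finset.card_univ, Fintype.card_fin,
        nsmul_eq_mul]

lemma summable_exp_neg_b (hd : 1 ≤ d) {b : (Fin d → ℝ) → ℝ} {c R : ℝ} (hc : 0 < c)
    (hlow : ∀ x : Fin d → ℝ, (∀ i, 0 ≤ x i) → R ≤ eNorm x → c * eNorm x ≤ b x) :
    Summable (fun ν : Fin d → ℕ => Real.exp (-b (nuR ν))) := by
  classical
  set r : ℝ := Real.exp (-(c / d)) with hr
  have hd0 : (0:ℝ) < d := by exact_mod_cast hd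
  have hr0 : 0 ≤ r := (Real.exp_pos _).le
  have hr1 : r < 1 := by
    rw [hr]
    exact Real.exp_lt_one_iff.2 (neg_lt_zero.2 (by positivity))
  set E : Set (Fin d → ℕ) := {ν | ∀ i, (ν i : ℝ) ≤ max R 0} with hE
  have hEfin : E.Finite := by
    have : E ⊆ Set.pi Set.univ (fun _ : Fin d => {n : ℕ | n ≤ Nat.floor (max R 0)}) := by
      intro ν hν i _
      exact Nat.le_floor (by simpa using hν i)
    exact (Set.Finite.pi (fun i => Set.finite_Iic (Nat.floor (max R 0)))).subset this
  have hbound : ∀ ν : Fin d → ℕ, Real.exp (-b (nuR ν)) ≤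
      r ^ (∑ i, ν i) + E.indicator (fun ν => Real.exp (-b (nuR ν))) ν := by
    intro ν
    by_cases hν : ν ∈ E
    · rw [Set.indicator_of_mem hν]
      have : (0:ℝ) ≤ r ^ (∑ i, ν i) := by positivity
      linarith
    · rw [Set.indicator_of_notMem hν, add_zero]
      rw [hE, Set.mem_setOf_eq] at hν
      push_neg at hν
      rcases hν with ⟨i, hi⟩
      have h1 : max R 0 < eNorm (nuR ν) := by
        have h2 := abs_le_eNorm (nuR ν) i
        rw [show nuR ν i = ((ν i : ℕ) : ℝ) from rfl, abs_of_nonneg (Nat.cast_nonneg _)] at h2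
        calc max R 0 < (ν i : ℝ) := hi
          _ ≤ eNorm (nuR ν) := h2
      have h3 : c * eNorm (nuR ν) ≤ b (nuR ν) :=
        hlow (nuR ν) (fun i => Nat.cast_nonneg _) (le_trans (le_max_left R 0) h1.le)
      have h4 : (c / d) * (∑ i, (ν i : ℝ)) ≤ b (nuR ν) := by
        have h5 := sum_le_d_mul_eNorm ν
        calc (c / d) * (∑ i, (ν i : ℝ)) ≤ (c / d) * (d * eNorm (nuR ν)) := by
              apply mul_le_mul_of_nonneg_left h5 (by positivity)
          _ = c * eNorm (nuR ν) := by
              rw [div_mul_eq_mul_div, mul_div_assoc, mul_comm ((d:ℝ)) (eNorm (nuR ν)), mul_div_assoc, div_self (ne_of_gt hd0), mul_one]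
          _ ≤ b (nuR ν) := h3
      have h6 : r ^ (∑ i, ν i) = Real.exp (-(c/d) * (∑ i, (ν i:ℝ))) := by
        rw [hr, ← Real.exp_nat_mul]
        congr 1
        push_cast
        ring
      rw [h6]
      apply Real.exp_le_exp.2
      nlinarith
  apply Summable.of_nonneg_of_le (fun ν => (Real.exp_pos _).le) hbound
  apply Summable.add (summable_geom_pi hr0 hr1 d)
  apply summable_of_finite_support
  apply hEfin.subset
  exact Set.support_indicator_subset

def cube (ν : Fin d → ℕ) : Set (Fin d → ℝ) := Set.univ.pi fun i => Set.Ico (ν i : ℝ) (ν i + 1)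

lemma volume_cube (ν : Fin d → ℕ) : volume (cube ν) = 1 := by
  rw [cube, volume_pi_pi]
  simp

lemma measurableSet_cube (ν : Fin d → ℕ) : MeasurableSet (cube ν) :=
  MeasurableSet.univ_pi fun i => measurableSet_Ico

lemma disjoint_cube {ν μ : Fin d → ℕ} (h : ν ≠ μ) : Disjoint (cube ν) (cube μ) := by
  rcases Function.ne_iff.1 h with ⟨i, hi⟩
  rw [Set.disjoint_left]
  rintro x hx hx'
  have h1 := hx i (Set.mem_univ i)
  have h2 := hx' i (Set.mem_univ i)
  simp only [Set.mem_Ico] at h1 h2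
  rcases Ne.lt_or_gt hi with hlt | hlt
  · have : (ν i : ℝ) + 1 ≤ (μ i : ℝ) := by exact_mod_cast Nat.succ_le_of_lt hlt
    linarith [h1.2, h2.1]
  · have : (μ i : ℝ) + 1 ≤ (ν i : ℝ) := by exact_mod_cast Nat.succ_le_of_lt hlt
    linarith [h1.1, h2.2]

lemma dist_le_one_of_mem_cube {ν : Fin d → ℕ} {x : Fin d → ℝ} (hx : x ∈ cube ν) :
    dist x (nuR ν) ≤ 1 := by
  rw [dist_pi_le_iff zero_le_one]
  intro i
  have := hx i (Set.mem_univ i)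
  simp only [Set.mem_Ico] at this
  rw [Real.dist_eq, abs_le]
  constructor <;> [skip; skip] <;> simp [nuR] <;> linarith [this.1, this.2]

lemma volume_biUnion_cube (S : Finset (Fin d → ℕ)) :
    volume (⋃ ν ∈ S, cube ν) = S.card := by
  rw [measure_biUnion_finset ?_ (fun ν _ => measurableSet_cube ν)]
  · simp [volume_cube]
  · intro ν _ μ _ h
    exact disjoint_cube h

/-- Key counting inequality: if every element of `S` (as a lattice point) lies in `t • A`,
then `card S ≤ t^d vol (cthickening (1/t) A)`. -/
lemma card_le_volume_cthickening {t : ℝ} (ht : 1 ≤ t) (S : Finset (Fin d → ℕ))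
    (A : Set (Fin d → ℝ)) (hS : ∀ ν ∈ S, t⁻¹ • nuR ν ∈ A) :
    (S.card : ℝ≥0∞) ≤ ENNReal.ofReal (t ^ d) * volume (Metric.cthickening t⁻¹ A) := by
  have ht0 : 0 < t := lt_of_lt_of_le one_pos ht
  have hsub : t⁻¹ • (⋃ ν ∈ S, cube ν) ⊆ Metric.cthickening t⁻¹ A := by
    rw [Set.smul_set_iUnion₂]
    refine Set.iUnion₂_subset fun ν hν => ?_
    rintro y ⟨x, hx, rfl⟩
    apply Metric.mem_cthickening_of_dist_le _ _ _ _ (hS ν hν)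
    rw [dist_smul₀]
    calc ‖t⁻¹‖ * dist x (nuR ν) ≤ ‖t⁻¹‖ * 1 := by
          exact mul_le_mul_of_nonneg_left (dist_le_one_of_mem_cube hx) (norm_nonneg _)
      _ = t⁻¹ := by rw [mul_one, Real.norm_eq_abs, abs_of_pos (inv_pos.2 ht0)]
  have hvol : volume (t⁻¹ • (⋃ ν ∈ S, cube ν)) =
      ENNReal.ofReal (t⁻¹ ^ d) * S.card := by
    rw [Measure.addHaar_smul, volume_biUnion_cube, Module.finrank_fin_fun,
      abs_of_pos (pow_pos (inv_pos.2 ht0) d)]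
  have h1 : ENNReal.ofReal (t⁻¹ ^ d) * S.card ≤ volume (Metric.cthickening t⁻¹ A) :=
    hvol ▸ measure_mono hsub
  calc (S.card : ℝ≥0∞) = ENNReal.ofReal (t ^ d) * (ENNReal.ofReal (t⁻¹ ^ d) * S.card) := by
        rw [← mul_assoc, ← ENNReal.ofReal_mul (by positivity), ← mul_pow,
          mul_inv_cancel₀ (ne_of_gt ht0), one_pow, ENNReal.ofReal_one, one_mul]
    _ ≤ ENNReal.ofReal (t ^ d) * volume (Metric.cthickening t⁻¹ A) := by
        exact mul_le_mul_right h1 _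

/-- scaled sublevel set -/
def Aset (b : (Fin d → ℝ) → ℝ) (t : ℝ) : Set (Fin d → ℝ) := t⁻¹ • Pset b t
/-- thickened scaled sublevel set -/
def Dset (b : (Fin d → ℝ) → ℝ) (t : ℝ) : Set (Fin d → ℝ) := Metric.cthickening t⁻¹ (Aset b t)

lemma mem_Aset_iff {b : (Fin d → ℝ) → ℝ} {t : ℝ} (ht : 0 < t) {x : Fin d → ℝ} :
    x ∈ Aset b t ↔ ((∀ i, 0 ≤ x i) ∧ b (t • x) ≤ t) := by
  rw [Aset, Set.mem_inv_smul_set_iff₀ (ne_of_gt ht)]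
  constructor
  · rintro ⟨h1, h2⟩
    refine ⟨fun i => ?_, h2⟩
    have := h1 i
    simp only [Pi.smul_apply, smul_eq_mul] at this
    nlinarith
  · rintro ⟨h1, h2⟩
    exact ⟨fun i => by simpa using mul_nonneg ht.le (h1 i), h2⟩

lemma Aset_antitone {b : (Fin d → ℝ) → ℝ} (hinc : IsIncreasingCase b) {s t : ℝ}
    (hs : 0 < s) (hst : s ≤ t) : Aset b t ⊆ Aset b s := by
  have ht : 0 < t := hs.trans_le hst
  intro x hx
  rw [mem_Aset_iff ht] at hx
  rw [mem_Aset_iff hs]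
  refine ⟨hx.1, ?_⟩
  have hmono := hinc x hx.1 (Set.mem_Ioi.2 hs) (Set.mem_Ioi.2 ht) hst
  have h2 : b (t • x) / t ≤ 1 := (div_le_one ht).2 hx.2
  have h3 : b (s • x) / s ≤ 1 := le_trans hmono h2
  exact (div_le_one hs).1 h3

lemma Aset_subset_ball {b : (Fin d → ℝ) → ℝ} {c R : ℝ} (hc : 0 < c)
    (hlow : ∀ x : Fin d → ℝ, (∀ i, 0 ≤ x i) → R ≤ eNorm x → c * eNorm x ≤ b x)
    {t : ℝ} (ht : 1 ≤ t) :
    Aset b t ⊆ Metric.closedBall 0 (max (max R 0) c⁻¹) := by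
  have ht0 : 0 < t := lt_of_lt_of_le one_pos ht
  intro x hx
  rw [mem_Aset_iff ht0] at hx
  have hxe : eNorm (t • x) = t * eNorm x := eNorm_smul ht0.le x
  have hnn : ∀ i, 0 ≤ (t • x) i := fun i => by simpa using mul_nonneg ht0.le (hx.1 i)
  rw [Metric.mem_closedBall, dist_zero_right]
  refine le_trans (norm_le_eNorm x) ?_
  by_cases hR : max R 0 ≤ eNorm (t • x)
  · have h1 := hlow (t • x) hnn (le_trans (le_max_left _ _) hR)
    have h2 : c * (t * eNorm x) ≤ t := by rw [← hxe]; exact h1.trans hx.2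
    have h3 : eNorm x ≤ c⁻¹ := by
      rw [inv_eq_one_div, le_div_iff₀ hc]
      nlinarith [eNorm_nonneg x]
    exact h3.trans (le_max_right _ _)
  · push_neg at hR
    have : t * eNorm x ≤ max R 0 := by rw [← hxe]; exact hR.le
    have h4 : eNorm x ≤ max R 0 := by nlinarith [eNorm_nonneg x, le_max_right R 0]
    exact h4.trans (le_max_left _ _)

lemma P_subset_ball {b : (Fin d → ℝ) → ℝ} {c R : ℝ} (hc : 0 < c)
    (hlow : ∀ x : Fin d → ℝ, (∀ i, 0 ≤ x i) → R ≤ eNorm x → c * eNorm x ≤ b x)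
    {P : Set (Fin d → ℝ)}
    (hP : (IsIncreasingCase b ∧ P = ⋂ τ ∈ Set.Ioi (0 : ℝ), τ⁻¹ • Pset b τ) ∨
          (IsDecreasingCase b ∧ P = ⋃ τ ∈ Set.Ioi (0 : ℝ), τ⁻¹ • Pset b τ)) :
    P ⊆ Metric.closedBall 0 (max (max R 0) c⁻¹) := by
  rcases hP with ⟨hinc, rfl⟩ | ⟨hdec, rfl⟩
  · intro x hx
    have h1 : x ∈ Aset b 1 := by
      have := Set.mem_iInter₂.1 hx 1 (Set.mem_Ioi.2 one_pos)
      exact this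
    exact Aset_subset_ball hc hlow le_rfl h1
  · intro x hx
    rcases Set.mem_iUnion₂.1 hx with ⟨τ, hτ, hxτ⟩
    rw [Set.mem_Ioi] at hτ
    have hxA : x ∈ Aset b τ := hxτ
    rw [mem_Aset_iff hτ] at hxA
    rw [Metric.mem_closedBall, dist_zero_right]
    refine le_trans (norm_le_eNorm x) ?_
    by_cases hx0 : x = 0
    · subst hx0
      simp only [eNorm]
      rw [show ∑ i, (0:Fin d → ℝ) i ^2 = 0 by simp, Real.sqrt_zero]
      positivity
    · have hex : 0 < eNorm x := eNorm_pos hx0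
      -- choose u large
      set u : ℝ := max τ ((max R 0 + 1) / eNorm x) with hu
      have hu0 : 0 < u := lt_of_lt_of_le hτ (le_max_left _ _)
      have huτ : τ ≤ u := le_max_left _ _
      have hmono := hdec x hxA.1 (Set.mem_Ioi.2 hτ) (Set.mem_Ioi.2 hu0) huτ
      have h2 : b (τ • x) / τ ≤ 1 := (div_le_one hτ).2 hxA.2
      have h3 : b (u • x) ≤ u := (div_le_one hu0).1 (hmono.trans h2)
      have hnn : ∀ i, 0 ≤ (u • x) i := fun i => by simpa using mul_nonneg hu0.le (hxA.1 i)
      have hue : eNorm (u • x) = u * eNorm x := eNorm_smul hu0.le x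
      have hR' : R ≤ eNorm (u • x) := by
        rw [hue]
        have : (max R 0 + 1) / eNorm x * eNorm x ≤ u * eNorm x :=
          mul_le_mul_of_nonneg_right (le_max_right _ _) hex.le
        rw [div_mul_cancel₀ _ (ne_of_gt hex)] at this
        have : max R 0 + 1 ≤ u * eNorm x := this
        nlinarith [le_max_left R 0]
      have h4 := hlow (u • x) hnn hR'
      rw [hue] at h4
      have h5 : c * (u * eNorm x) ≤ u := h4.trans h3
      have h6 : eNorm x ≤ c⁻¹ := by
        rw [inv_eq_one_div, le_div_iff₀ hc]
        nlinarith
      exact h6.trans (le_max_right _ _)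

lemma isClosed_Aset {b : (Fin d → ℝ) → ℝ} (hcont : ContinuousOn b {x | ∀ i, 0 ≤ x i})
    {t : ℝ} (ht : 0 < t) : IsClosed (Aset b t) :=
  (isClosed_Pset hcont t).smul_of_ne_zero (inv_ne_zero (ne_of_gt ht))

lemma volume_cthickening_ball_lt_top {B r : ℝ} (hB : 0 ≤ B) (hr : 0 ≤ r) :
    volume (Metric.cthickening r (Metric.closedBall (0 : Fin d → ℝ) B)) < ∞ := by
  rw [cthickening_closedBall hr hB]
  exact measure_closedBall_lt_top

theorem volume_Dset_eventually_le {b : (Fin d → ℝ) → ℝ} {c R : ℝ} (hc : 0 < c)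
    (hlow : ∀ x : Fin d → ℝ, (∀ i, 0 ≤ x i) → R ≤ eNorm x → c * eNorm x ≤ b x)
    (hcont : ContinuousOn b {x | ∀ i, 0 ≤ x i})
    {P : Set (Fin d → ℝ)}
    (hP : (IsIncreasingCase b ∧ P = ⋂ τ ∈ Set.Ioi (0 : ℝ), τ⁻¹ • Pset b τ) ∨
          (IsDecreasingCase b ∧ P = ⋃ τ ∈ Set.Ioi (0 : ℝ), τ⁻¹ • Pset b τ))
    (hJordan : volume (frontier P) = 0)
    {η : ℝ} (hη : 0 < η) :
    ∃ T : ℝ, 1 ≤ T ∧ ∀ t : ℝ, T ≤ t → volume (Dset b t) ≤ volume P + ENNReal.ofReal η := by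
  set B : ℝ := max (max R 0) c⁻¹ with hB
  have hB0 : 0 ≤ B := le_trans (le_max_right R 0) (le_max_left _ _)
  have hPfin : volume P ≠ ∞ := by
    refine ne_of_lt (lt_of_le_of_lt (measure_mono (P_subset_ball hc hlow hP)) ?_)
    exact measure_closedBall_lt_top
  rcases hP with ⟨hinc, hPeq⟩ | ⟨hdec, hPeq⟩
  · -- increasing case
    set Dn : ℕ → Set (Fin d → ℝ) := fun n => Dset b (n + 1) with hDn
    have hDt_mono : ∀ s t : ℝ, 0 < s → s ≤ t → Dset b t ⊆ Dset b s := by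
      intro s t hs hst
      refine le_trans (Metric.cthickening_mono (by
        apply inv_anti₀ hs hst) _) ?_
      exact Metric.cthickening_subset_of_subset _ (Aset_antitone hinc hs hst)
    have hanti : Antitone Dn := by
      intro n m hnm
      have hcast : ((n:ℝ)) ≤ (m:ℝ) := Nat.cast_le.2 hnm
      exact hDt_mono _ _ (by positivity) (by linarith)
    have hmeas : ∀ n, NullMeasurableSet (Dn n) volume := fun n =>
      Metric.isClosed_cthickening.measurableSet.nullMeasurableSet
    have hfin : ∃ n, volume (Dn n) ≠ ∞ := by
      have h1 : Aset b (((0:ℕ):ℝ)+1) ⊆ Metric.closedBall 0 B :=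
        Aset_subset_ball hc hlow (by norm_num)
      have hsub : Dn 0 ⊆ Metric.cthickening 1 (Metric.closedBall (0 : Fin d → ℝ) B) :=
        calc Dn 0 ⊆ Metric.cthickening ((((0:ℕ):ℝ)+1)⁻¹) (Metric.closedBall (0 : Fin d → ℝ) B) :=
              Metric.cthickening_subset_of_subset _ h1
          _ ⊆ _ := Metric.cthickening_mono (by norm_num) _
      exact ⟨0, ne_of_lt (lt_of_le_of_lt (measure_mono hsub) (volume_cthickening_ball_lt_top hB0 zero_le_one))⟩
    have htend := tendsto_measure_iInter_atTop hmeas hanti hfin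
    have hInter_sub_P : (⋂ n, Dn n) ⊆ P := by
      intro x hx
      have hxn : ∀ n : ℕ, ∃ a ∈ Aset b (n+1), dist x a < 2 / (n+1) := by
        intro n
        have h1 : x ∈ Dn n := Set.mem_iInter.1 hx n
        have h2 : ((n:ℝ)+1)⁻¹ < 2/(n+1) := by
          have hpos : (0:ℝ) < (n:ℝ)+1 := by positivity
          rw [inv_eq_one_div, div_lt_div_iff₀ hpos hpos]
          nlinarith
        have h3 : x ∈ Metric.thickening (2/(n+1)) (Aset b (n+1)) :=
          Metric.cthickening_subset_thickening' (by positivity) h2 _ h1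
        exact Metric.mem_thickening_iff.1 h3
      choose a ha hdist using hxn
      have hlim : Tendsto a atTop (𝓝 x) := by
        rw [tendsto_iff_dist_tendsto_zero]
        apply squeeze_zero (fun n => dist_nonneg) (fun n => (dist_comm (a n) x ▸ (hdist n).le))
        have := (tendsto_one_div_add_atTop_nhds_zero_nat (𝕜 := ℝ)).const_mul 2
        simpa [div_eq_mul_inv, mul_comm] using this
      rw [hPeq]
      refine Set.mem_iInter₂.2 fun τ hτ => ?_
      rw [Set.mem_Ioi] at hτ
      have : x ∈ Aset b τ := by
        refine (isClosed_Aset hcont hτ).mem_of_tendsto hlim ?_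
        filter_upwards [eventually_ge_atTop (Nat.ceil τ)] with n hn
        refine Aset_antitone hinc hτ ?_ (ha n)
        calc τ ≤ (Nat.ceil τ : ℝ) := Nat.le_ceil τ
          _ ≤ (n : ℝ) := by exact_mod_cast hn
          _ ≤ (n : ℝ) + 1 := by linarith
      exact this
    have hlt : volume (⋂ n, Dn n) < volume P + ENNReal.ofReal η := by
      calc volume (⋂ n, Dn n) ≤ volume P := measure_mono hInter_sub_P
        _ < volume P + ENNReal.ofReal η :=
          ENNReal.lt_add_right hPfin (by simpa using hη)
    have hev := htend.eventually_lt_const hlt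
    rcases (eventually_atTop).1 hev with ⟨n0, hn0⟩
    refine ⟨(n0 : ℝ) + 1, by nlinarith [Nat.cast_nonneg (α := ℝ) n0], fun t htT => ?_⟩
    have h1 : Dset b t ⊆ Dn n0 := hDt_mono _ _ (by positivity) htT
    exact le_trans (measure_mono h1) (hn0 n0 le_rfl).le
  · -- decreasing case
    have hAP : ∀ t : ℝ, 0 < t → Aset b t ⊆ P := by
      intro t ht
      rw [hPeq]
      exact Set.subset_biUnion_of_mem (Set.mem_Ioi.2 ht)
    have hfin : ∃ r > (0:ℝ), volume (Metric.cthickening r P) ≠ ∞ := by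
      refine ⟨1, one_pos, ne_of_lt (lt_of_le_of_lt (measure_mono ?_) (volume_cthickening_ball_lt_top hB0 zero_le_one))⟩
      exact Metric.cthickening_subset_of_subset _ (P_subset_ball hc hlow (Or.inr ⟨hdec, hPeq⟩))
    have htend := tendsto_measure_cthickening hfin
    have hclos : volume (closure P) ≤ volume P := by
      calc volume (closure P) ≤ volume (P ∪ frontier P) := by
            rw [← closure_eq_self_union_frontier]
        _ ≤ volume P + volume (frontier P) := measure_union_le _ _
        _ = volume P := by rw [hJordan, add_zero]
    have hlt : volume (closure P) < volume P + ENNReal.ofReal η :=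
      lt_of_le_of_lt hclos (ENNReal.lt_add_right hPfin (by simpa using hη))
    have hev := htend.eventually_lt_const hlt
    rcases Metric.eventually_nhds_iff.1 hev with ⟨δ, hδ0, hδ⟩
    refine ⟨max 1 (2/δ), le_max_left _ _, fun t htT => ?_⟩
    have ht1 : (1:ℝ) ≤ t := le_trans (le_max_left _ _) htT
    have ht0 : 0 < t := lt_of_lt_of_le one_pos ht1
    have htδ : t⁻¹ < δ := by
      have h2δ : 2/δ ≤ t := le_trans (le_max_right _ _) htT
      have h3 : 2 ≤ t * δ := (div_le_iff₀ hδ0).1 h2δ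
      have : t⁻¹ ≤ δ/2 := by
        rw [inv_eq_one_div, div_le_div_iff₀ ht0 (by norm_num)]
        nlinarith
      linarith
    have h1 : Dset b t ⊆ Metric.cthickening t⁻¹ P :=
      Metric.cthickening_subset_of_subset _ (hAP t ht0)
    have h2 : dist t⁻¹ (0:ℝ) < δ := by
      rw [Real.dist_eq, sub_zero, abs_of_pos (inv_pos.2 ht0)]
      exact htδ
    exact le_trans (measure_mono h1) (hδ h2).le

theorem count_upper {b : (Fin d → ℝ) → ℝ} {c R : ℝ} (hc : 0 < c)
    (hlow : ∀ x : Fin d → ℝ, (∀ i, 0 ≤ x i) → R ≤ eNorm x → c * eNorm x ≤ b x)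
    (hcont : ContinuousOn b {x | ∀ i, 0 ≤ x i})
    {P : Set (Fin d → ℝ)}
    (hP : (IsIncreasingCase b ∧ P = ⋂ τ ∈ Set.Ioi (0 : ℝ), τ⁻¹ • Pset b τ) ∨
          (IsDecreasingCase b ∧ P = ⋃ τ ∈ Set.Ioi (0 : ℝ), τ⁻¹ • Pset b τ))
    (hJordan : volume (frontier P) = 0)
    {η : ℝ} (hη : 0 < η) :
    ∃ T : ℝ, 1 ≤ T ∧ ∀ t : ℝ, T ≤ t → ∀ S : Finset (Fin d → ℕ),
      (∀ ν ∈ S, b (nuR ν) ≤ t) →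
      (S.card : ℝ) ≤ ((volume P).toReal + η) * t ^ d := by
  have hPfin : volume P ≠ ∞ :=
    ne_of_lt (lt_of_le_of_lt (measure_mono (P_subset_ball hc hlow hP)) measure_closedBall_lt_top)
  obtain ⟨T, hT1, hT⟩ := volume_Dset_eventually_le hc hlow hcont hP hJordan hη
  refine ⟨T, hT1, fun t ht S hS => ?_⟩
  have ht1 : (1:ℝ) ≤ t := hT1.trans ht
  have ht0 : (0:ℝ) < t := lt_of_lt_of_le one_pos ht1
  have hmem : ∀ ν ∈ S, t⁻¹ • nuR ν ∈ Aset b t := by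
    intro ν hν
    rw [mem_Aset_iff ht0]
    constructor
    · intro i
      simp only [Pi.smul_apply, smul_eq_mul, nuR]
      positivity
    · rw [smul_smul, mul_inv_cancel₀ (ne_of_gt ht0), one_smul]
      exact hS ν hν
  have h1 := card_le_volume_cthickening ht1 S (Aset b t) hmem
  have h2 : (S.card : ℝ≥0∞) ≤ ENNReal.ofReal (t ^ d) * (volume P + ENNReal.ofReal η) :=
    h1.trans (mul_le_mul_right (hT t ht) _)
  have hv : volume P + ENNReal.ofReal η = ENNReal.ofReal ((volume P).toReal + η) := by
    rw [ENNReal.ofReal_add ENNReal.toReal_nonneg hη.le, ENNReal.ofReal_toReal hPfin]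
  rw [hv, ← ENNReal.ofReal_mul (by positivity)] at h2
  have h3 : ENNReal.ofReal ((S.card : ℝ)) ≤ ENNReal.ofReal (t ^ d * ((volume P).toReal + η)) := by
    rw [ENNReal.ofReal_natCast]
    exact h2
  have h4 := (ENNReal.ofReal_le_ofReal_iff (by positivity)).1 h3
  linarith [h4]

lemma Cu_ge_three_e {ε : ℝ} (hε : 0 < ε) : 3 * Real.exp 1 ≤ Cu ε := by
  have he : (2.7182818283 : ℝ) < Real.exp 1 := Real.exp_one_gt_d9
  rw [Cu, le_div_iff₀ (by linarith : (0:ℝ) < Real.exp 1 - 1)]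
  nlinarith [Real.exp_pos 1, mul_nonneg (mul_nonneg hε.le (Real.exp_pos 1).le) (Real.exp_pos 1).le]

lemma Cu_ge_one {ε : ℝ} (hε : 0 < ε) : 1 ≤ Cu ε := by
  have he : (2.7182818283 : ℝ) < Real.exp 1 := Real.exp_one_gt_d9
  have := Cu_ge_three_e hε
  nlinarith

lemma pow_shift_le {t : ℝ} {dd : ℕ} (hdd : 1 ≤ dd) (ht : 2 * dd ≤ t) (k : ℕ) :
    (t + k + 1) ^ dd ≤ t ^ dd * Real.exp (((k:ℝ) + 1) / 2) := by
  have hdd' : (1:ℝ) ≤ dd := by exact_mod_cast hdd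
  have ht0 : 0 < t := by nlinarith
  set x : ℝ := ((k:ℝ) + 1) / t with hx
  have hx0 : 0 ≤ x := by positivity
  have hsplit : t + k + 1 = t * (1 + x) := by
    rw [hx, mul_add, mul_one, mul_div_cancel₀ _ ht0.ne']; ring
  rw [hsplit, mul_pow]
  refine mul_le_mul_of_nonneg_left ?_ (by positivity)
  calc (1 + x) ^ dd ≤ (Real.exp x) ^ dd := by
        apply pow_le_pow_left₀ (by positivity)
        linarith [Real.add_one_le_exp x]
    _ = Real.exp (dd * x) := by rw [← Real.exp_nat_mul]
    _ ≤ Real.exp (((k:ℝ) + 1) / 2) := by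
        apply Real.exp_le_exp.2
        rw [hx]
        have hre : (dd:ℝ) * (((k:ℝ) + 1) / t) = ((dd:ℝ) * ((k:ℝ)+1)) / t := by ring
        rw [hre, div_le_div_iff₀ ht0 (by norm_num : (0:ℝ) < 2)]
        nlinarith [Nat.cast_nonneg (α := ℝ) k]

end AuxLemmas

/-- Quasi-optimal tail bound (Lemma 2.1 / Theorem 2 of the quasi-optimal analysis):
for every `ε > 0` there is `M_ε` so that for all `M ≥ M_ε` and every quasi-optimal
index set `Λ_M ⊂ ℕ^d` of cardinality `M`,
`∑_{ν ∉ Λ_M} e^{−b(ν)} ≤ C_u(ε) M exp(−(M/(|P|(1+ε)))^{1/d})`. -/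
theorem stmt0 {d : ℕ} (hd : 1 ≤ d) (b : (Fin d → ℝ) → ℝ) (hb : AssumptionA b)
    (P : Set (Fin d → ℝ))
    (hPinc : IsIncreasingCase b → P = ⋂ τ ∈ Set.Ioi (0 : ℝ), τ⁻¹ • Pset b τ)
    (hPdec : IsDecreasingCase b → P = ⋃ τ ∈ Set.Ioi (0 : ℝ), τ⁻¹ • Pset b τ)
    (hJordan : volume (frontier P) = 0) :
    ∀ ε : ℝ, 0 < ε → ∃ Mε : ℕ, ∀ M : ℕ, Mε ≤ M →
      ∀ Λ : Finset (Fin d → ℕ), Λ.card = M →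
        (∀ ν ∈ Λ, ∀ μ : Fin d → ℕ, μ ∉ Λ → b (nuR ν) ≤ b (nuR μ)) →
        (∑' ν : {ν : Fin d → ℕ // ν ∉ Λ}, Real.exp (-b (nuR ν.1))) ≤
          Cu ε * M *
            Real.exp (-((M : ℝ) / ((volume P).toReal * (1 + ε))) ^ ((1 : ℝ) / d)) := by
  obtain ⟨hb0, hbcont, hbmono, c, C, hc, hcC, R, hiii⟩ := hb
  have hlow : ∀ x : Fin d → ℝ, (∀ i, 0 ≤ x i) → R ≤ eNorm x → c * eNorm x ≤ b x :=
    fun x h1 h2 => (hiii x h1 h2).1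
  have hP : (IsIncreasingCase b ∧ P = ⋂ τ ∈ Set.Ioi (0 : ℝ), τ⁻¹ • Pset b τ) ∨
      (IsDecreasingCase b ∧ P = ⋃ τ ∈ Set.Ioi (0 : ℝ), τ⁻¹ • Pset b τ) := by
    rcases hbmono with h | h
    · exact Or.inl ⟨h, hPinc h⟩
    · exact Or.inr ⟨h, hPdec h⟩
  set v : ℝ := (volume P).toReal with hvdef
  have hv0 : 0 ≤ v := ENNReal.toReal_nonneg
  have hsum : Summable (fun ν : Fin d → ℕ => Real.exp (-b (nuR ν))) :=
    summable_exp_neg_b hd hc hlow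
  set f : (Fin d → ℕ) → ℝ := fun ν => Real.exp (-b (nuR ν)) with hf
  have hf0 : ∀ ν, 0 ≤ f ν := fun ν => (Real.exp_pos _).le
  intro ε hε
  have hCu3 : 3 * Real.exp 1 ≤ Cu ε := Cu_ge_three_e hε
  have hCu1 : 1 ≤ Cu ε := Cu_ge_one hε
  by_cases hv : v = 0
  · -- degenerate case : RHS is Cu ε * M
    refine ⟨Nat.ceil (∑' ν, f ν) + 1, fun M hM Λ hcard hqo => ?_⟩
    have hrhs : ((M : ℝ) / (v * (1 + ε))) ^ ((1:ℝ)/d) = 0 := by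
      rw [hv, zero_mul, div_zero]
      exact Real.zero_rpow (by positivity)
    rw [hrhs, neg_zero, Real.exp_zero, mul_one]
    have h1 : (∑' ν : {ν : Fin d → ℕ // ν ∉ Λ}, f ν.1) ≤ ∑' ν, f ν :=
      Summable.tsum_subtype_le f {ν : Fin d → ℕ | ν ∉ Λ} hf0 hsum
    have h2 : (∑' ν, f ν) ≤ (M : ℝ) := by
      calc (∑' ν, f ν) ≤ (Nat.ceil (∑' ν, f ν) : ℝ) := Nat.le_ceil _
        _ ≤ (M : ℝ) := by exact_mod_cast le_trans (Nat.le_succ _) hM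
    calc (∑' ν : {ν : Fin d → ℕ // ν ∉ Λ}, f ν.1) ≤ (M:ℝ) := h1.trans h2
      _ ≤ Cu ε * M := by nlinarith [Nat.cast_nonneg (α := ℝ) M]
  · have hvpos : 0 < v := lt_of_le_of_ne hv0 (Ne.symm hv)
    set η : ℝ := v * ε / 2 with hη
    have hηpos : 0 < η := by positivity
    obtain ⟨T, hT1, hcount⟩ := count_upper hc hlow hbcont hP hJordan hηpos
    set T2 : ℝ := max T (2 * d) with hT2
    have hT21 : 1 ≤ T2 := hT1.trans (le_max_left _ _)
    set Mε : ℕ := max (Nat.ceil (v * (1 + ε) * T2 ^ d) + 1) 1 with hMε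
    refine ⟨Mε, fun M hM Λ hcard hqo => ?_⟩
    have hM1 : 1 ≤ M := le_trans (le_max_right _ _) hM
    have hMv : v * (1 + ε) * T2 ^ d ≤ (M : ℝ) := by
      calc v * (1 + ε) * T2 ^ d ≤ (Nat.ceil (v * (1 + ε) * T2 ^ d) : ℝ) := Nat.le_ceil _
        _ ≤ (M : ℝ) := by
            exact_mod_cast le_trans (Nat.le_succ _) (le_trans (le_max_left _ _) hM)
    have hden : 0 < v * (1 + ε) := by positivity
    set q : ℝ := (M : ℝ) / (v * (1 + ε)) with hq
    have hq0 : 0 ≤ q := by positivity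
    set ts : ℝ := q ^ ((1:ℝ)/d) with hts
    have htspow : ts ^ d = q := by
      rw [hts, one_div]
      exact Real.rpow_inv_natCast_pow hq0 (by omega)
    have hts0 : 0 ≤ ts := Real.rpow_nonneg hq0 _
    have hqT : T2 ^ d ≤ q := by
      rw [hq, le_div_iff₀ hden]
      nlinarith
    have htsT2 : T2 ≤ ts := by
      have h1 : ((T2 ^ d : ℝ)) ^ ((1:ℝ)/d) ≤ q ^ ((1:ℝ)/d) :=
        Real.rpow_le_rpow (by positivity) hqT (by positivity)
      have h2 : ((T2 ^ d : ℝ)) ^ ((1:ℝ)/d) = T2 := by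
        rw [one_div]
        exact Real.pow_rpow_inv_natCast (by linarith : (0:ℝ) ≤ T2) (by omega)
      rw [h2] at h1
      exact h1
    have htsT : T ≤ ts := le_trans (le_max_left _ _) htsT2
    have hts2d : 2 * (d:ℝ) ≤ ts := le_trans (le_max_right _ _) htsT2
    have htspos : 0 < ts := lt_of_lt_of_le (lt_of_lt_of_le one_pos hT21) htsT2
    -- Step 1 : all μ outside Λ have b > ts
    have hstep1 : ∀ μ : Fin d → ℕ, μ ∉ Λ → ts < b (nuR μ) := by
      intro μ hμ
      by_contra hle
      push_neg at hle
      have hall : ∀ ν ∈ insert μ Λ, b (nuR ν) ≤ ts := by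
        intro ν hν
        rcases Finset.mem_insert.1 hν with rfl | hν
        · exact hle
        · exact (hqo ν hν μ hμ).trans hle
      have hcd := hcount ts htsT (insert μ Λ) hall
      rw [Finset.card_insert_of_notMem hμ, hcard] at hcd
      have hM1' : ((M:ℝ) + 1) ≤ (v + η) * ts ^ d := by exact_mod_cast hcd
      rw [htspow, hq] at hM1'
      have hkey : (v + η) * ((M:ℝ) / (v * (1 + ε))) ≤ (M:ℝ) := by
        rw [mul_div_assoc', div_le_iff₀ hden]
        have hMnn : (0:ℝ) ≤ (M:ℝ) := Nat.cast_nonneg M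
        nlinarith
      linarith
    -- Step 2 : series bound
    -- buckets
    set Tset : Set (Fin d → ℕ) := {ν | ν ∉ Λ} with hTset
    set Bk : ℕ → Set (Fin d → ℕ) :=
      fun k => {ν | ν ∉ Λ ∧ ts + k ≤ b (nuR ν) ∧ b (nuR ν) ≤ ts + k + 1} with hBk
    have hBfin : ∀ k, (Bk k).Finite := by
      intro k
      apply (finite_sublevel hc hlow (ts + k + 1)).subset
      intro ν hν
      exact hν.2.2
    -- ENNReal computation
    set F : (Fin d → ℕ) → ℝ≥0∞ := fun ν => ENNReal.ofReal (f ν) with hF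
    have hofReal : ENNReal.ofReal (∑' ν : {ν : Fin d → ℕ // ν ∉ Λ}, f ν.1) =
        ∑' ν : {ν : Fin d → ℕ // ν ∉ Λ}, F ν.1 :=
      ENNReal.ofReal_tsum_of_nonneg (fun ν => hf0 ν.1) (hsum.subtype _)
    have hsubty : (∑' ν : {ν : Fin d → ℕ // ν ∉ Λ}, F ν.1) = ∑' ν, Tset.indicator F ν :=
      tsum_subtype Tset F
    have hcover : ∀ ν, Tset.indicator F ν ≤ ∑' k : ℕ, (Bk k).indicator F ν := by
      intro ν
      by_cases hν : ν ∈ Tset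
      · have hb1 : ts < b (nuR ν) := hstep1 ν hν
        set k : ℕ := Nat.floor (b (nuR ν) - ts) with hk
        have hk1 : (k:ℝ) ≤ b (nuR ν) - ts := Nat.floor_le (by linarith)
        have hk2 : b (nuR ν) - ts < k + 1 := Nat.lt_floor_add_one _
        have hmem : ν ∈ Bk k := ⟨hν, by linarith, by linarith⟩
        calc Tset.indicator F ν = F ν := Set.indicator_of_mem hν F
          _ = (Bk k).indicator F ν := (Set.indicator_of_mem hmem F).symm
          _ ≤ ∑' k : ℕ, (Bk k).indicator F ν := ENNReal.le_tsum k
      · rw [Set.indicator_of_notMem hν]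
        exact zero_le
    have hswap : (∑' ν, ∑' k : ℕ, (Bk k).indicator F ν) =
        ∑' k : ℕ, ∑' ν, (Bk k).indicator F ν := ENNReal.tsum_comm
    -- per-bucket bound
    set u : ℕ → ℝ := fun k => (v + η) * (ts + k + 1) ^ d * Real.exp (-(ts + k)) with hu
    have hbucket : ∀ k : ℕ, (∑' ν, (Bk k).indicator F ν) ≤ ENNReal.ofReal (u k) := by
      intro k
      have hfs := hBfin k
      have hsum_eq : (∑' ν, (Bk k).indicator F ν) = ∑ ν ∈ hfs.toFinset, F ν := by
        rw [tsum_eq_sum (s := hfs.toFinset) ?_]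
        · apply Finset.sum_congr rfl
          intro ν hν
          exact Set.indicator_of_mem (hfs.mem_toFinset.1 hν) F
        · intro ν hν
          exact Set.indicator_of_notMem (fun h => hν (hfs.mem_toFinset.2 h)) F
      have hterm : ∀ ν ∈ hfs.toFinset, F ν ≤ ENNReal.ofReal (Real.exp (-(ts + k))) := by
        intro ν hν
        have h1 := (hfs.mem_toFinset.1 hν).2.1
        exact ENNReal.ofReal_le_ofReal (Real.exp_le_exp.2 (by linarith))
      have hcardB : ((hfs.toFinset.card : ℝ)) ≤ (v + η) * (ts + k + 1) ^ d := by
        apply hcount (ts + k + 1) (by linarith [Nat.cast_nonneg (α := ℝ) k]) hfs.toFinset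
        intro ν hν
        exact (hfs.mem_toFinset.1 hν).2.2
      calc (∑' ν, (Bk k).indicator F ν) = ∑ ν ∈ hfs.toFinset, F ν := hsum_eq
        _ ≤ hfs.toFinset.card • ENNReal.ofReal (Real.exp (-(ts + k))) :=
            Finset.sum_le_card_nsmul _ _ _ hterm
        _ = (hfs.toFinset.card : ℝ≥0∞) * ENNReal.ofReal (Real.exp (-(ts + k))) := by
            rw [nsmul_eq_mul]
        _ ≤ ENNReal.ofReal ((v + η) * (ts + k + 1) ^ d) * ENNReal.ofReal (Real.exp (-(ts + k))) := by
            apply mul_le_mul_left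
            rw [← ENNReal.ofReal_natCast]
            exact ENNReal.ofReal_le_ofReal hcardB
        _ = ENNReal.ofReal (u k) := by
            rw [← ENNReal.ofReal_mul (by positivity), hu]
    -- the geometric series bound
    set w : ℕ → ℝ := fun k =>
      ((v + η) * ts ^ d * Real.exp (-ts) * Real.exp (1/2)) * (Real.exp (-(1/2))) ^ k with hw
    have huw : ∀ k, u k ≤ w k := by
      intro k
      simp only [hu, hw]
      have h1 : (ts + k + 1) ^ d ≤ ts ^ d * Real.exp (((k:ℝ) + 1) / 2) :=
        pow_shift_le hd hts2d k
      have h2 : Real.exp (-(ts + k)) = Real.exp (-ts) * Real.exp (-(k:ℝ)) := by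
        rw [← Real.exp_add]; ring_nf
      have h3 : (Real.exp (-(1/2))) ^ k = Real.exp (-((k:ℝ)/2)) := by
        rw [← Real.exp_nat_mul]; ring_nf
      rw [h2, h3]
      have h4 : Real.exp (((k:ℝ) + 1) / 2) * Real.exp (-(k:ℝ)) =
          Real.exp (1/2) * Real.exp (-((k:ℝ)/2)) := by
        rw [← Real.exp_add, ← Real.exp_add]; ring_nf
      calc (v + η) * (ts + k + 1) ^ d * (Real.exp (-ts) * Real.exp (-(k:ℝ)))
          ≤ (v + η) * (ts ^ d * Real.exp (((k:ℝ) + 1) / 2)) * (Real.exp (-ts) * Real.exp (-(k:ℝ))) := by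
            apply mul_le_mul_of_nonneg_right (mul_le_mul_of_nonneg_left h1 (by positivity)) (by positivity)
        _ = (v + η) * ts ^ d * Real.exp (-ts) * (Real.exp (((k:ℝ) + 1) / 2) * Real.exp (-(k:ℝ))) := by ring
        _ = (v + η) * ts ^ d * Real.exp (-ts) * Real.exp (1/2) * Real.exp (-((k:ℝ)/2)) := by
            rw [h4]; ring
    have hwsum : Summable w := by
      apply Summable.mul_left
      exact summable_geometric_of_lt_one (Real.exp_pos _).le
        (Real.exp_lt_one_iff.2 (by norm_num))
    have husum : Summable u := by
      refine Summable.of_nonneg_of_le (fun k => by positivity) huw hwsum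
    have hwtsum : (∑' k, w k) = ((v + η) * ts ^ d * Real.exp (-ts) * Real.exp (1/2)) *
        (1 - Real.exp (-(1/2)))⁻¹ := by
      rw [hw, tsum_mul_left, tsum_geometric_of_lt_one (Real.exp_pos _).le
        (Real.exp_lt_one_iff.2 (by norm_num))]
    have hgeom : Real.exp (1/2) * (1 - Real.exp (-(1/2)))⁻¹ ≤ 3 * Real.exp 1 := by
      have he1 : (3:ℝ)/2 ≤ Real.exp (1/2) := by
        have := Real.add_one_le_exp (1/2 : ℝ)
        linarith
      have he2 : Real.exp (-(1/2)) ≤ 2/3 := by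
        rw [Real.exp_neg]
        rw [inv_le_comm₀ (Real.exp_pos _) (by norm_num)]
        linarith
      have he3 : (1:ℝ)/3 ≤ 1 - Real.exp (-(1/2)) := by linarith
      have he4 : (1 - Real.exp (-(1/2)))⁻¹ ≤ 3 := by
        rw [inv_le_comm₀ (by linarith) (by norm_num)]
        linarith
      have he5 : Real.exp (1/2) ≤ Real.exp 1 := Real.exp_le_exp.2 (by norm_num)
      have hpos : (0:ℝ) < (1 - Real.exp (-(1/2)))⁻¹ := by
        apply inv_pos.2; linarith
      calc Real.exp (1/2) * (1 - Real.exp (-(1/2)))⁻¹ ≤ Real.exp 1 * 3 := by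
            apply mul_le_mul he5 he4 hpos.le (Real.exp_pos _).le
        _ = 3 * Real.exp 1 := by ring
    have hutsum : (∑' k, u k) ≤ Cu ε * M * Real.exp (-ts) := by
      have h1 : (∑' k, u k) ≤ ∑' k, w k :=
        Summable.tsum_le_tsum huw husum hwsum
      rw [hwtsum] at h1
      have h2 : (v + η) ≤ v * (1 + ε) := by
        rw [hη]; nlinarith
      have h3 : v * (1 + ε) * ts ^ d = (M:ℝ) := by
        rw [htspow, hq]
        field_simp
      have h4 : ((v + η) * ts ^ d * Real.exp (-ts) * Real.exp (1/2)) *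
          (1 - Real.exp (-(1/2)))⁻¹ ≤
          (v * (1+ε)) * ts ^ d * Real.exp (-ts) * (3 * Real.exp 1) := by
        have hts_d : (0:ℝ) ≤ ts ^ d := by positivity
        have : (v + η) * ts ^ d * Real.exp (-ts) ≤ (v * (1+ε)) * ts ^ d * Real.exp (-ts) := by
          apply mul_le_mul_of_nonneg_right (mul_le_mul_of_nonneg_right h2 hts_d) (Real.exp_pos _).le
        calc ((v + η) * ts ^ d * Real.exp (-ts) * Real.exp (1/2)) * (1 - Real.exp (-(1/2)))⁻¹
            = ((v + η) * ts ^ d * Real.exp (-ts)) * (Real.exp (1/2) * (1 - Real.exp (-(1/2)))⁻¹) := by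
              ring
          _ ≤ ((v * (1+ε)) * ts ^ d * Real.exp (-ts)) * (3 * Real.exp 1) := by
              apply mul_le_mul this hgeom ?_ ?_
              · have hpos : (0:ℝ) < (1 - Real.exp (-(1/2)))⁻¹ := by
                  apply inv_pos.2
                  have := Real.exp_lt_one_iff.2 (show -(1/2 : ℝ) < 0 by norm_num)
                  linarith
                positivity
              · positivity
          _ = (v * (1+ε)) * ts ^ d * Real.exp (-ts) * (3 * Real.exp 1) := rfl
      rw [h3] at h4
      calc (∑' k, u k) ≤ (M:ℝ) * Real.exp (-ts) * (3 * Real.exp 1) := h1.trans h4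
        _ = (3 * Real.exp 1) * (M:ℝ) * Real.exp (-ts) := by ring
        _ ≤ Cu ε * M * Real.exp (-ts) := by
            apply mul_le_mul_of_nonneg_right ?_ (Real.exp_pos _).le
            apply mul_le_mul_of_nonneg_right hCu3 (Nat.cast_nonneg M)
    -- putting it together in ℝ≥0∞
    have hmain : ENNReal.ofReal (∑' ν : {ν : Fin d → ℕ // ν ∉ Λ}, f ν.1) ≤
        ENNReal.ofReal (Cu ε * M * Real.exp (-ts)) := by
      rw [hofReal, hsubty]
      calc (∑' ν, Tset.indicator F ν) ≤ ∑' ν, ∑' k : ℕ, (Bk k).indicator F ν :=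
            ENNReal.tsum_le_tsum hcover
        _ = ∑' k : ℕ, ∑' ν, (Bk k).indicator F ν := hswap
        _ ≤ ∑' k : ℕ, ENNReal.ofReal (u k) := ENNReal.tsum_le_tsum hbucket
        _ = ENNReal.ofReal (∑' k, u k) :=
            (ENNReal.ofReal_tsum_of_nonneg (fun k => by positivity) husum).symm
        _ ≤ ENNReal.ofReal (Cu ε * M * Real.exp (-ts)) := ENNReal.ofReal_le_ofReal hutsum
    have hfinal := (ENNReal.ofReal_le_ofReal_iff (by positivity)).1 hmain
    exact hfinal
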